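/- The Gaussian family G_m is convergence determining: if (μ_k) and μ are Borel probability measures on ℝ^m such that ∫ φ dμ_k → ∫ φ dμ as k → ∞ for every φ ∈ G_m, then μ_k converges weakly to μ, i.e., ∫ f dμ_k → ∫ f dμ for every bounded continuous f: ℝ^m → ℝ. -/

import Mathlib

open MeasureTheory Filter
open scoped BigOperators Topology

/-- A member of the countable Gaussian family `G_m`: the function
`y ↦ exp(−Σ_{j=1}^n q_j |y − x_j|²)` on `ℝ^m`, with rational `q_j` and
rational points `x_j ∈ ℚ^m`. -/
noncomputable def gaussFn {m : ℕ} (n : ℕ) (q : Fin n → ℚ) (xs : Fin n → Fin m → ℚ)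
    (y : EuclideanSpace ℝ (Fin m)) : ℝ :=
  Real.exp (- ∑ j : Fin n,
    (q j : ℝ) * ‖y - (WithLp.equiv 2 (Fin m → ℝ)).symm (fun i => (xs j i : ℝ))‖ ^ 2)

namespace GaussCD

variable {m : ℕ}

lemma gaussFn_continuous {n : ℕ} (q : Fin n → ℚ) (xs : Fin n → Fin m → ℚ) :
    Continuous (gaussFn n q xs (m := m)) := by
  apply Real.continuous_exp.comp
  apply (continuous_finset_sum _ fun j _ => ?_).neg
  exact continuous_const.mul (((continuous_id.sub continuous_const).norm).pow 2)

lemma gaussFn_mul {n n' : ℕ} (q : Fin n → ℚ) (q' : Fin n' → ℚ)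
    (xs : Fin n → Fin m → ℚ) (xs' : Fin n' → Fin m → ℚ) (y : EuclideanSpace ℝ (Fin m)) :
    gaussFn n q xs y * gaussFn n' q' xs' y
      = gaussFn (n + n') (Fin.append q q') (Fin.append xs xs') y := by
  unfold gaussFn
  rw [← Real.exp_add]
  congr 1
  rw [Fin.sum_univ_add]
  simp [Fin.append_left, Fin.append_right]
  ring

lemma tendsto_norm_sub {x : EuclideanSpace ℝ (Fin m)} :
    Tendsto (fun y : EuclideanSpace ℝ (Fin m) => ‖y - x‖) (cocompact _) atTop := by
  have h1 : Tendsto (fun y : EuclideanSpace ℝ (Fin m) => y - x) (cocompact _) (cocompact _) :=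
    ((Homeomorph.subRight x).isClosedEmbedding.tendsto_cocompact).congr fun y => rfl
  exact tendsto_norm_cocompact_atTop.comp h1

lemma gaussFn_tendsto_zero {n : ℕ} (q : Fin (n+1) → ℚ) (xs : Fin (n+1) → Fin m → ℚ)
    (hq : ∀ j, 0 < q j) :
    Tendsto (gaussFn (n+1) q xs) (cocompact (EuclideanSpace ℝ (Fin m))) (𝓝 0) := by
  set x0 : EuclideanSpace ℝ (Fin m) :=
    (WithLp.equiv 2 (Fin m → ℝ)).symm (fun i => (xs 0 i : ℝ)) with hx0
  have hb : ∀ y, gaussFn (n+1) q xs y ≤ Real.exp (-((q 0 : ℝ) * ‖y - x0‖ ^ 2)) := by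
    intro y
    apply Real.exp_le_exp.2
    rw [neg_le_neg_iff]
    exact Finset.single_le_sum (f := fun j : Fin (n+1) =>
      (q j : ℝ) * ‖y - (WithLp.equiv 2 (Fin m → ℝ)).symm (fun i => (xs j i : ℝ))‖ ^ 2)
      (fun j _ => mul_nonneg (by exact_mod_cast (hq j).le) (by positivity)) (Finset.mem_univ 0)
  have hlim : Tendsto (fun y : EuclideanSpace ℝ (Fin m) =>
      Real.exp (-((q 0 : ℝ) * ‖y - x0‖ ^ 2))) (cocompact _) (𝓝 0) := by
    apply Real.tendsto_exp_atBot.comp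
    apply tendsto_neg_atTop_atBot.comp
    apply Tendsto.const_mul_atTop (by exact_mod_cast hq 0)
    exact (tendsto_pow_atTop (two_ne_zero)).comp tendsto_norm_sub
  exact squeeze_zero (fun y => (Real.exp_pos _).le) hb hlim

lemma exists_rat_close (y : EuclideanSpace ℝ (Fin m)) {δ : ℝ} (hδ : 0 < δ) :
    ∃ p : Fin m → ℚ,
      ‖y - (WithLp.equiv 2 (Fin m → ℝ)).symm (fun i => (p i : ℝ))‖ < δ := by
  have hb : 0 < δ / (m + 1) := by positivity
  have : ∀ i : Fin m, ∃ r : ℚ, |y i - (r : ℝ)| < δ / (m + 1) := by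
    intro i
    obtain ⟨r, hr1, hr2⟩ := exists_rat_btwn (show y i - δ/(m+1) < y i + δ/(m+1) by linarith)
    exact ⟨r, abs_lt.2 ⟨by linarith, by linarith⟩⟩
  choose p hp using this
  refine ⟨p, ?_⟩
  rw [EuclideanSpace.norm_eq, Real.sqrt_lt' hδ]
  have key : ∀ i : Fin m,
      ‖(y - (WithLp.equiv 2 (Fin m → ℝ)).symm (fun i => (p i : ℝ))) i‖ ^ 2 ≤ (δ/(m+1))^2 := by
    intro i
    have h1 : ‖(y - (WithLp.equiv 2 (Fin m → ℝ)).symm (fun i => (p i : ℝ))) i‖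
        = |y i - (p i : ℝ)| := by
      simp [Real.norm_eq_abs]
    rw [h1]
    exact pow_le_pow_left₀ (abs_nonneg _) (hp i).le 2
  calc ∑ i, ‖(y - (WithLp.equiv 2 (Fin m → ℝ)).symm (fun i => (p i : ℝ))) i‖ ^ 2
      ≤ ∑ _i : Fin m, (δ / (m+1)) ^ 2 := Finset.sum_le_sum fun i _ => key i
    _ ≤ (m : ℝ) * (δ/(m+1))^2 := by
        rw [Finset.sum_const, Finset.card_univ, Fintype.card_fin]; simp
    _ < δ ^ 2 := by
        have hm1 : (0:ℝ) < ((m:ℝ)+1)^2 := by positivity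
        have hmlt : (m : ℝ) < ((m:ℝ)+1)^2 := by nlinarith [Nat.cast_nonneg (α := ℝ) m]
        rw [div_pow, mul_div_assoc', div_lt_iff₀ hm1]
        nlinarith [pow_pos hδ 2]

noncomputable def extC0 (g : EuclideanSpace ℝ (Fin m) → ℝ) (hgc : Continuous g)
    (hg0 : Tendsto g (cocompact (EuclideanSpace ℝ (Fin m))) (𝓝 0)) :
    C(OnePoint (EuclideanSpace ℝ (Fin m)), ℝ) :=
  ⟨fun p => p.elim 0 g, by
    rw [OnePoint.continuous_iff]
    exact ⟨by rw [Filter.coclosedCompact_eq_cocompact]; exact hg0, hgc⟩⟩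

@[simp] lemma extC0_coe (g : EuclideanSpace ℝ (Fin m) → ℝ) (hgc) (hg0)
    (y : EuclideanSpace ℝ (Fin m)) : extC0 g hgc hg0 y = g y := rfl

@[simp] lemma extC0_infty (g : EuclideanSpace ℝ (Fin m) → ℝ) (hgc) (hg0) :
    extC0 g hgc hg0 OnePoint.infty = 0 := rfl

/-- The set of extensions to the one-point compactification of nontrivial Gaussians. -/
def gaussSet (m : ℕ) : Set C(OnePoint (EuclideanSpace ℝ (Fin m)), ℝ) :=
  { F | ∃ (n : ℕ) (q : Fin (n+1) → ℚ) (xs : Fin (n+1) → Fin m → ℚ) (hq : ∀ j, 0 < q j),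
      F = extC0 (gaussFn (n+1) q xs) (gaussFn_continuous q xs) (gaussFn_tendsto_zero q xs hq) }

lemma append_pos {n n' : ℕ} {q : Fin n → ℚ} {q' : Fin n' → ℚ}
    (hq : ∀ j, 0 < q j) (hq' : ∀ j, 0 < q' j) : ∀ j, 0 < Fin.append q q' j := by
  intro j
  refine Fin.addCases (fun i => ?_) (fun i => ?_) j
  · rw [Fin.append_left]; exact hq i
  · rw [Fin.append_right]; exact hq' i

lemma gaussSet_mul_mem {a b : C(OnePoint (EuclideanSpace ℝ (Fin m)), ℝ)}
    (ha : a ∈ gaussSet m) (hb : b ∈ gaussSet m) : a * b ∈ gaussSet m := by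
  obtain ⟨n, q, xs, hq, rfl⟩ := ha
  obtain ⟨n', q', xs', hq', rfl⟩ := hb
  refine ⟨n + 1 + n', (Fin.append q q' : Fin ((n+1)+(n'+1)) → ℚ), (Fin.append xs xs' : Fin ((n+1)+(n'+1)) → Fin m → ℚ), ?_, ?_⟩
  · exact append_pos hq hq'
  · ext p
    induction p using OnePoint.rec with
    | infty => simp [ContinuousMap.mul_apply]
    | coe y =>
      simp only [ContinuousMap.mul_apply, extC0_coe]
      exact gaussFn_mul q q' xs xs' y

lemma integrable_comp_coe (a : C(OnePoint (EuclideanSpace ℝ (Fin m)), ℝ))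
    (ν : Measure (EuclideanSpace ℝ (Fin m))) [IsProbabilityMeasure ν] :
    Integrable (fun y : EuclideanSpace ℝ (Fin m) => a y) ν := by
  have hc : Continuous fun y : EuclideanSpace ℝ (Fin m) => a y :=
    a.continuous.comp OnePoint.continuous_coe
  refine Integrable.mono' (integrable_const ‖a‖) hc.aestronglyMeasurable ?_
  exact Eventually.of_forall fun y => a.norm_coe_le_norm _

end GaussCD

namespace GaussCD

variable {m : ℕ}

/-- `gaussSet` together with `1` forms a submonoid. -/
noncomputable def gaussMonoid (m : ℕ) : Submonoid C(OnePoint (EuclideanSpace ℝ (Fin m)), ℝ) where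
  carrier := insert 1 (gaussSet m)
  one_mem' := Set.mem_insert _ _
  mul_mem' := by
    rintro a b (rfl | ha) hb
    · rw [one_mul]; exact hb
    · rcases hb with rfl | hb
      · rw [mul_one]; exact Set.mem_insert_iff.2 (Or.inr ha)
      · exact Set.mem_insert_iff.2 (Or.inr (gaussSet_mul_mem ha hb))

lemma adjoin_gaussSet_subset_span :
    (Algebra.adjoin ℝ (gaussSet m) : Set C(OnePoint (EuclideanSpace ℝ (Fin m)), ℝ))
      ⊆ (Submodule.span ℝ (insert 1 (gaussSet m)) :
          Submodule ℝ C(OnePoint (EuclideanSpace ℝ (Fin m)), ℝ)) := by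
  intro a ha
  have h1 : a ∈ Submodule.span ℝ ((Submonoid.closure (gaussSet m) : Submonoid _) :
      Set C(OnePoint (EuclideanSpace ℝ (Fin m)), ℝ)) := by
    have heq := Algebra.adjoin_eq_span (R := ℝ) (s := gaussSet m)
    have ha' : a ∈ Subalgebra.toSubmodule (Algebra.adjoin ℝ (gaussSet m)) := ha
    rw [heq] at ha'
    exact ha'
  refine Submodule.span_mono ?_ h1
  have hle : Submonoid.closure (gaussSet m) ≤ gaussMonoid m :=
    Submonoid.closure_le.2 (Set.subset_insert _ _)
  exact hle

end GaussCD

namespace GaussCD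

variable {m : ℕ}

/-- Convergence of integrals holds for every element of the adjoined algebra. -/
lemma tendsto_integral_of_mem_adjoin
    (μs : ℕ → Measure (EuclideanSpace ℝ (Fin m))) (μ : Measure (EuclideanSpace ℝ (Fin m)))
    [∀ k, IsProbabilityMeasure (μs k)] [IsProbabilityMeasure μ]
    (h : ∀ (n : ℕ) (q : Fin n → ℚ) (xs : Fin n → Fin m → ℚ), (∀ j, 0 < q j) →
      Tendsto (fun k => ∫ y, gaussFn n q xs y ∂(μs k)) atTop
        (𝓝 (∫ y, gaussFn n q xs y ∂μ)))
    (a : C(OnePoint (EuclideanSpace ℝ (Fin m)), ℝ)) (ha : a ∈ Algebra.adjoin ℝ (gaussSet m)) :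
    Tendsto (fun k => ∫ y, a y ∂(μs k)) atTop (𝓝 (∫ y, a y ∂μ)) := by
  have hsp : a ∈ Submodule.span ℝ (insert 1 (gaussSet m)) := adjoin_gaussSet_subset_span ha
  clear ha
  induction hsp using Submodule.span_induction with
  | mem b hb =>
    rcases hb with rfl | ⟨n, q, xs, hq, rfl⟩
    · simp only [ContinuousMap.one_apply]
      simp only [integral_const, measure_univ, ENNReal.toReal_one, probReal_univ, smul_eq_mul, one_mul]
      exact tendsto_const_nhds
    · exact h (n+1) q xs hq
  | zero => simp only [ContinuousMap.zero_apply, integral_zero]; exact tendsto_const_nhds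
  | add b c hb hc ihb ihc =>
    have hb' : ∀ (ν : Measure (EuclideanSpace ℝ (Fin m))) [IsProbabilityMeasure ν],
        ∫ y, (b + c) (y : OnePoint (EuclideanSpace ℝ (Fin m))) ∂ν
          = (∫ y, b y ∂ν) + ∫ y, c y ∂ν := by
      intro ν _
      simp only [ContinuousMap.add_apply]
      exact integral_add (integrable_comp_coe b ν) (integrable_comp_coe c ν)
    simp only [hb']
    exact ihb.add ihc
  | smul r b hb ihb =>
    have hb' : ∀ (ν : Measure (EuclideanSpace ℝ (Fin m))) [IsProbabilityMeasure ν],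
        ∫ y, (r • b) (y : OnePoint (EuclideanSpace ℝ (Fin m))) ∂ν
          = r • ∫ y, b y ∂ν := by
      intro ν _
      simp only [ContinuousMap.smul_apply]
      exact integral_smul r _
    simp only [hb']
    exact ihb.const_smul r

/-- The adjoined algebra separates points of the one-point compactification. -/
lemma adjoin_gaussSet_separatesPoints :
    (Algebra.adjoin ℝ (gaussSet m)).SeparatesPoints := by
  intro p p' hne
  have basic : ∀ (c : Fin m → ℚ),
      (extC0 (gaussFn 1 (fun _ => 1) (fun _ => c))
        (gaussFn_continuous _ _) (gaussFn_tendsto_zero _ _ (fun _ => one_pos)) :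
        C(OnePoint (EuclideanSpace ℝ (Fin m)), ℝ)) ∈ (Algebra.adjoin ℝ (gaussSet m) :
          Subalgebra ℝ C(OnePoint (EuclideanSpace ℝ (Fin m)), ℝ)) := by
    intro c
    exact Algebra.subset_adjoin ⟨0, fun _ => 1, fun _ => c, fun _ => one_pos, rfl⟩
  have gpos : ∀ (c : Fin m → ℚ) (y : EuclideanSpace ℝ (Fin m)),
      0 < gaussFn 1 (fun _ => 1) (fun _ => c) y := fun _ _ => Real.exp_pos _
  induction p using OnePoint.rec with
  | infty =>
    induction p' using OnePoint.rec with
    | infty => exact absurd rfl hne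
    | coe y =>
      refine ⟨_, ⟨_, basic 0, rfl⟩, ?_⟩
      simp only [extC0_infty, extC0_coe]
      exact ne_of_lt (gpos 0 y)
  | coe x =>
    induction p' using OnePoint.rec with
    | infty =>
      refine ⟨_, ⟨_, basic 0, rfl⟩, ?_⟩
      simp only [extC0_infty, extC0_coe]
      exact ne_of_gt (gpos 0 x)
    | coe y =>
      have hxy : x ≠ y := fun hh => hne (by rw [hh])
      have hnorm : 0 < ‖x - y‖ := by
        rw [norm_pos_iff, sub_ne_zero]; exact hxy
      obtain ⟨c, hc⟩ := exists_rat_close x (show (0:ℝ) < ‖x - y‖/2 by linarith)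
      set z : EuclideanSpace ℝ (Fin m) :=
        (WithLp.equiv 2 (Fin m → ℝ)).symm (fun i => (c i : ℝ)) with hz
      have hyz : ‖x - y‖/2 < ‖y - z‖ := by
        have h1 : ‖x - y‖ ≤ ‖x - z‖ + ‖z - y‖ := norm_sub_le_norm_sub_add_norm_sub x z y
        have h2 : ‖z - y‖ = ‖y - z‖ := norm_sub_rev _ _
        linarith
      refine ⟨_, ⟨_, basic c, rfl⟩, ?_⟩
      simp only [extC0_coe]
      unfold gaussFn
      intro hcontra
      have hinj := Real.exp_injective hcontra
      rw [neg_inj] at hinj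
      simp only [Fin.sum_univ_one, Rat.cast_one, one_mul] at hinj
      have hx2 : ‖x - z‖^2 < ‖y - z‖^2 := by
        have h0 : (0:ℝ) ≤ ‖x - z‖ := norm_nonneg _
        nlinarith
      rw [hinj] at hx2
      exact lt_irrefl _ hx2

end GaussCD

namespace GaussCD

variable {m : ℕ}

/-- Key lemma: integrals of continuous functions vanishing at infinity converge. -/
lemma tendsto_integral_of_c0
    (μs : ℕ → Measure (EuclideanSpace ℝ (Fin m))) (μ : Measure (EuclideanSpace ℝ (Fin m)))
    [∀ k, IsProbabilityMeasure (μs k)] [IsProbabilityMeasure μ]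
    (h : ∀ (n : ℕ) (q : Fin n → ℚ) (xs : Fin n → Fin m → ℚ), (∀ j, 0 < q j) →
      Tendsto (fun k => ∫ y, gaussFn n q xs y ∂(μs k)) atTop
        (𝓝 (∫ y, gaussFn n q xs y ∂μ)))
    (g : EuclideanSpace ℝ (Fin m) → ℝ) (hgc : Continuous g)
    (hg0 : Tendsto g (cocompact (EuclideanSpace ℝ (Fin m))) (𝓝 0)) :
    Tendsto (fun k => ∫ y, g y ∂(μs k)) atTop (𝓝 (∫ y, g y ∂μ)) := by
  set G : C(OnePoint (EuclideanSpace ℝ (Fin m)), ℝ) := extC0 g hgc hg0 with hG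
  rw [Metric.tendsto_atTop]
  intro ε hε
  obtain ⟨⟨a, haA⟩, hab⟩ :=
    ContinuousMap.exists_mem_subalgebra_near_continuousMap_of_separatesPoints
      (Algebra.adjoin ℝ (gaussSet m)) adjoin_gaussSet_separatesPoints G (ε/4) (by linarith)
  simp only at hab
  -- pointwise approximation
  have hpt : ∀ y : EuclideanSpace ℝ (Fin m), ‖g y - a y‖ ≤ ε/4 := by
    intro y
    have h1 : ‖(a - G) ((y : OnePoint (EuclideanSpace ℝ (Fin m))))‖ ≤ ‖a - G‖ :=
      (a - G).norm_coe_le_norm _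
    have h2 : (a - G) ((y : OnePoint (EuclideanSpace ℝ (Fin m)))) = a y - g y := by
      simp [hG]
    rw [h2] at h1
    rw [norm_sub_rev]
    exact h1.trans hab.le
  -- integral approximation for any probability measure
  have hint : ∀ (ν : Measure (EuclideanSpace ℝ (Fin m))) [IsProbabilityMeasure ν],
      |(∫ y, g y ∂ν) - ∫ y, a y ∂ν| ≤ ε/4 := by
    intro ν _
    have hgInt : Integrable g ν := by
      have := integrable_comp_coe G ν
      simpa [hG] using this
    rw [← integral_sub hgInt (integrable_comp_coe a ν)]
    calc |∫ y, (g y - a y) ∂ν| ≤ ∫ y, ‖g y - a y‖ ∂ν := by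
          rw [← Real.norm_eq_abs]
          exact norm_integral_le_integral_norm _
      _ ≤ ∫ _y, (ε/4) ∂ν := by
          apply integral_mono (hgInt.sub (integrable_comp_coe a ν)).norm (integrable_const _)
          exact hpt
      _ = ε/4 := by simp
  have hPa := tendsto_integral_of_mem_adjoin μs μ h a haA
  rw [Metric.tendsto_atTop] at hPa
  obtain ⟨N, hN⟩ := hPa (ε/4) (by linarith)
  refine ⟨N, fun k hk => ?_⟩
  have h1 := hint (μs k)
  have h2 := hint μ
  have h3 := hN k hk
  rw [Real.dist_eq] at h3 ⊢
  have : (∫ y, g y ∂(μs k)) - ∫ y, g y ∂μ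
      = ((∫ y, g y ∂(μs k)) - ∫ y, a y ∂(μs k))
        + ((∫ y, a y ∂(μs k)) - ∫ y, a y ∂μ)
        + ((∫ y, a y ∂μ) - ∫ y, g y ∂μ) := by ring
  rw [this]
  calc |_ + _ + _| ≤ |(∫ y, g y ∂(μs k)) - ∫ y, a y ∂(μs k)|
        + |(∫ y, a y ∂(μs k)) - ∫ y, a y ∂μ|
        + |(∫ y, a y ∂μ) - ∫ y, g y ∂μ| := abs_add_three _ _ _
    _ < ε := by
        rw [abs_sub_comm (∫ y, a y ∂μ)] at *
        linarith

end GaussCD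

/-- The Gaussian family `G_m` is convergence determining: if `(μ_k)` and `μ` are Borel
probability measures on `ℝ^m` such that `∫ φ dμ_k → ∫ φ dμ` for every member `φ` of the
Gaussian family, then `μ_k` converges weakly to `μ`, i.e. `∫ f dμ_k → ∫ f dμ` for every
bounded continuous `f : ℝ^m → ℝ`. -/
theorem gaussian_family_convergence_determining
    (m : ℕ) (μs : ℕ → Measure (EuclideanSpace ℝ (Fin m)))
    (μ : Measure (EuclideanSpace ℝ (Fin m)))
    [∀ k, IsProbabilityMeasure (μs k)] [IsProbabilityMeasure μ]
    (h : ∀ (n : ℕ) (q : Fin n → ℚ) (xs : Fin n → Fin m → ℚ), (∀ j, 0 < q j) →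
      Tendsto (fun k => ∫ y, gaussFn n q xs y ∂(μs k)) atTop
        (𝓝 (∫ y, gaussFn n q xs y ∂μ))) :
    ∀ f : BoundedContinuousFunction (EuclideanSpace ℝ (Fin m)) ℝ,
      Tendsto (fun k => ∫ y, f y ∂(μs k)) atTop (𝓝 (∫ y, f y ∂μ)) := by
  apply BoundedContinuousFunction.tendsto_integral_of_forall_integral_le_liminf_integral
  intro F F_nn
  have F_nn' : ∀ y, 0 ≤ F y := fun y => F_nn y
  -- cutoff functions
  have hcut : ∀ n : ℕ, ∃ χ : C(EuclideanSpace ℝ (Fin m), ℝ),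
      Set.EqOn χ 1 (Metric.closedBall 0 n) ∧ Set.EqOn χ 0 (Metric.ball 0 (n+1))ᶜ ∧
      HasCompactSupport χ ∧ ∀ y, χ y ∈ Set.Icc (0:ℝ) 1 := by
    intro n
    apply exists_continuous_one_zero_of_isCompact (isCompact_closedBall 0 n)
      (Metric.isOpen_ball.isClosed_compl)
    rw [Set.disjoint_compl_right_iff_subset]
    exact Metric.closedBall_subset_ball (by linarith)
  choose χ hχ1 hχ0 hχc hχ01 using hcut
  set g : ℕ → EuclideanSpace ℝ (Fin m) → ℝ := fun n y => F y * χ n y with hg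
  have hgcont : ∀ n, Continuous (g n) := fun n => F.continuous.mul (χ n).continuous
  have hgcs : ∀ n, HasCompactSupport (g n) := by
    intro n
    exact (hχc n).mul_left
  have hgc0 : ∀ n, Tendsto (g n) (cocompact (EuclideanSpace ℝ (Fin m))) (𝓝 0) := by
    intro n
    apply Tendsto.congr' _ tendsto_const_nhds
    have : (tsupport (g n))ᶜ ∈ cocompact (EuclideanSpace ℝ (Fin m)) :=
      Filter.hasBasis_cocompact.mem_of_mem (hgcs n)
    filter_upwards [this] with y hy
    exact (image_eq_zero_of_notMem_tsupport hy).symm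
  have hgInt : ∀ (n : ℕ) (ν : Measure (EuclideanSpace ℝ (Fin m))) [IsProbabilityMeasure ν],
      Integrable (g n) ν := fun n ν _ => (hgcont n).integrable_of_hasCompactSupport (hgcs n)
  -- each truncation's integral is below the liminf
  have step2 : ∀ n : ℕ, (∫ y, g n y ∂μ) ≤ atTop.liminf (fun k => ∫ y, F y ∂(μs k)) := by
    intro n
    have htd := GaussCD.tendsto_integral_of_c0 μs μ h (g n) (hgcont n) (hgc0 n)
    rw [← htd.liminf_eq]
    apply liminf_le_liminf
    · apply Eventually.of_forall
      intro k
      apply integral_mono (hgInt n (μs k)) (F.integrable _)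
      intro y
      exact mul_le_of_le_one_right (F_nn' y) (hχ01 n y).2
    · exact htd.isBoundedUnder_ge
    · apply IsBoundedUnder.isCoboundedUnder_ge
      exact isBoundedUnder_of
        ⟨‖F‖, fun k => (Real.le_norm_self _).trans (F.norm_integral_le_norm (μs k))⟩
  -- truncations converge to the full integral
  have step3 : Tendsto (fun n => ∫ y, g n y ∂μ) atTop (𝓝 (∫ y, F y ∂μ)) := by
    apply tendsto_integral_of_dominated_convergence (bound := fun _ => ‖F‖)
    · exact fun n => (hgcont n).aestronglyMeasurable
    · exact integrable_const _
    · intro n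
      apply Eventually.of_forall
      intro y
      have h1 : ‖g n y‖ = |F y| * |χ n y| := by rw [hg]; simp [abs_mul]
      rw [h1]
      calc |F y| * |χ n y| ≤ |F y| * 1 := by
            apply mul_le_mul_of_nonneg_left _ (abs_nonneg _)
            rw [abs_le]
            exact ⟨by linarith [(hχ01 n y).1], (hχ01 n y).2⟩
        _ ≤ ‖F‖ := by rw [mul_one, ← Real.norm_eq_abs]; exact F.norm_coe_le_norm y
    · apply Eventually.of_forall
      intro y
      apply Tendsto.congr' _ tendsto_const_nhds
      rw [Filter.EventuallyEq, eventually_atTop]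
      refine ⟨⌈‖y‖⌉₊, fun n hn => ?_⟩
      have hmem : y ∈ Metric.closedBall (0 : EuclideanSpace ℝ (Fin m)) n := by
        rw [Metric.mem_closedBall, dist_zero_right]
        exact le_trans (Nat.le_ceil _) (by exact_mod_cast hn)
      have := hχ1 n hmem
      rw [hg]
      simp only [this, Pi.one_apply, mul_one]
  exact le_of_tendsto step3 (Eventually.of_forall step2)
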